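/- In the fixed-point subalgebra of sl_3[t,t^{-1}] under θ₁, the elements 𝐞_i = A_{i,i+1}^{(0)} for i=1,2 and 𝐞_3 = A_{1,3}^{(-1)} satisfy the generalized Dolan–Grady relations [𝐞_i, [𝐞_i, 𝐞_j]] = 𝐞_j for all adjacent pairs i ≠ j in the affine A_2 Dynkin diagram (where all three nodes are mutually adjacent). -/

import Mathlib

open LaurentPolynomial

/-- `e_{ij}^{(n)} = E_{ij} t^n` in the loop algebra of `sl_3 ⊂ gl_3` (0-based indices). -/
noncomputable def loopE3 (i j : Fin 3) (n : ℤ) :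
    Matrix (Fin 3) (Fin 3) (LaurentPolynomial ℂ) :=
  Matrix.single i j (T n)

/-- `B_{ij}^{(n)} = e_{ij}^{(n)} + (-1)^{i+j+1+3n} e_{ji}^{(-n)}` (the sign with 0-based
indices has the same parity as with the 1-based convention of the paper). -/
noncomputable def loopB3 (i j : Fin 3) (n : ℤ) :
    Matrix (Fin 3) (Fin 3) (LaurentPolynomial ℂ) :=
  loopE3 i j n + ((-1 : ℂ) ^ ((i : ℕ) + (j : ℕ) + 1 + 3 * n)) • loopE3 j i (-n)

/-- In the `θ₁`-fixed subalgebra of `sl_3[t,t⁻¹]`, the elements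
`𝐞_1 = A_{12}^{(0)}`, `𝐞_2 = A_{23}^{(0)}`, `𝐞_3 = A_{13}^{(-1)}` satisfy the
generalized Dolan–Grady relations `[𝐞_i, [𝐞_i, 𝐞_j]] = 𝐞_j` for all `i ≠ j`
(all three nodes of the affine `A_2` Dynkin diagram are mutually adjacent). -/
lemma hB1 : loopB3 0 1 0 = !![0, 1, 0; 1, 0, 0; 0, 0, 0] := by
  ext a b : 2
  fin_cases a <;> fin_cases b <;>
    norm_num [loopB3, loopE3, Matrix.single, T_zero, Fin.ext_iff,
      Matrix.vecHead, Matrix.vecTail]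

lemma hB2 : loopB3 1 2 0 = !![0, 0, 0; 0, 0, 1; 0, 1, 0] := by
  ext a b : 2
  fin_cases a <;> fin_cases b <;>
    norm_num [loopB3, loopE3, Matrix.single, T_zero, Fin.ext_iff,
      Matrix.vecHead, Matrix.vecTail]

lemma hB3 : loopB3 0 2 (-1) = !![0, 0, T (-1); 0, 0, 0; T 1, 0, 0] := by
  ext a b : 2
  fin_cases a <;> fin_cases b <;>
    norm_num [loopB3, loopE3, Matrix.single, Fin.ext_iff,
      Matrix.vecHead, Matrix.vecTail]

set_option maxHeartbeats 1000000 in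
theorem stmt6 (E : Fin 3 → Matrix (Fin 3) (Fin 3) (LaurentPolynomial ℂ))
    (hE1 : E 0 = loopB3 0 1 0) (hE2 : E 1 = loopB3 1 2 0)
    (hE3 : E 2 = loopB3 0 2 (-1)) :
    ∀ i j : Fin 3, i ≠ j → ⁅E i, ⁅E i, E j⁆⁆ = E j := by
  rw [hB1] at hE1; rw [hB2] at hE2; rw [hB3] at hE3
  have hT : T (1 : ℤ) * T (-1) = (1 : LaurentPolynomial ℂ) := by
    rw [← T_add]; norm_num
  have hT' : T (-1 : ℤ) * T 1 = (1 : LaurentPolynomial ℂ) := by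
    rw [← T_add]; norm_num
  intro i j hij
  fin_cases i <;> fin_cases j <;>
    simp only [Fin.mk_zero, Fin.mk_one, Fin.reduceFinMk, ne_eq] at hij ⊢ <;>
    [exact absurd trivial hij;
     rw [hE1, hE2]; rw [hE1, hE3]; rw [hE2, hE1]; exact absurd trivial hij;
     rw [hE2, hE3]; rw [hE3, hE1]; rw [hE3, hE2]; exact absurd trivial hij] <;>
    rw [Ring.lie_def, Ring.lie_def] <;>
    simp [Matrix.mul_fin_three, hT, hT'] <;>
    try simp [Matrix.vecHead, Matrix.vecTail, Matrix.of_symm_apply]
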